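/- Any solution u of the turbulent steady equation (1/ρ)·d/dρ[ρ²(1−ρ)^{1−α} u'] + λ² e^u = 0 on (0,1) with zero flux at the axis and u continuous at 0 is strictly decreasing on (0,1). -/
import Mathlib

open Real Set Filter

/-- Any solution of the turbulent steady equation
`(1/ρ)·d/dρ[ρ²(1−ρ)^{1−α} u'] + λ² e^u = 0` on `(0,1)` with zero flux at the axis
and `u` continuous at `0` is strictly decreasing on `(0,1)`. -/
theorem stmt_7 (α lam : ℝ) (hα : α ∈ Set.Ioo (0:ℝ) 1) (hlam : 0 < lam)
    (u u' : ℝ → ℝ)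
    (hderiv : ∀ ρ ∈ Set.Ioo (0:ℝ) 1, HasDerivAt u (u' ρ) ρ)
    (hode : ∀ ρ ∈ Set.Ioo (0:ℝ) 1,
      HasDerivAt (fun s => s ^ 2 * (1 - s) ^ (1 - α) * u' s)
        (-(lam ^ 2 * ρ * Real.exp (u ρ))) ρ)
    (hcont : ContinuousWithinAt u (Set.Ici 0) 0)
    (hflux : Tendsto (fun ρ => ρ ^ 2 * (1 - ρ) ^ (1 - α) * u' ρ)
      (nhdsWithin 0 (Set.Ioi 0)) (nhds 0)) :
    StrictAntiOn u (Set.Ioo (0:ℝ) 1) := by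
  set F : ℝ → ℝ := fun s => s ^ 2 * (1 - s) ^ (1 - α) * u' s with hF
  have hFanti : StrictAntiOn F (Set.Ioo (0:ℝ) 1) := by
    apply strictAntiOn_of_deriv_neg (convex_Ioo 0 1)
    · exact fun x hx => (hode x hx).continuousAt.continuousWithinAt
    · intro x hx
      rw [interior_Ioo] at hx
      rw [(hode x hx).deriv]
      have := mul_pos (mul_pos (pow_pos hlam 2) hx.1) (Real.exp_pos (u x))
      linarith
  have hFle : ∀ ρ ∈ Set.Ioo (0:ℝ) 1, F ρ ≤ 0 := by
    intro ρ hρ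
    refine ge_of_tendsto hflux ?_
    filter_upwards [Ioo_mem_nhdsGT_of_mem ⟨le_refl (0:ℝ), hρ.1⟩] with σ hσ
    exact (hFanti ⟨hσ.1, hσ.2.trans hρ.2⟩ hρ hσ.2).le
  have hu' : ∀ ρ ∈ Set.Ioo (0:ℝ) 1, u' ρ < 0 := by
    intro ρ hρ
    have h2 : ρ/2 ∈ Set.Ioo (0:ℝ) 1 := ⟨by linarith [hρ.1], by linarith [hρ.2]⟩
    have hneg : F ρ < 0 :=
      lt_of_lt_of_le (hFanti h2 hρ (by linarith [hρ.1])) (hFle _ h2)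
    have hpos : 0 < ρ ^ 2 * (1 - ρ) ^ (1 - α) :=
      mul_pos (pow_pos hρ.1 2) (Real.rpow_pos_of_pos (by linarith [hρ.2]) _)
    by_contra h
    push_neg at h
    have : 0 ≤ F ρ := mul_nonneg hpos.le h
    linarith
  apply strictAntiOn_of_deriv_neg (convex_Ioo 0 1)
  · exact fun x hx => (hderiv x hx).continuousAt.continuousWithinAt
  · intro x hx
    rw [interior_Ioo] at hx
    rw [(hderiv x hx).deriv]
    exact hu' x hx
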